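/- arXiv:1706.03953 — 2 statements merged into one kernel-verified Lean document; each statement's English description precedes it below -/
import Mathlib

section
/- Define the extended target density $\tilde{\pi}_N(k, \alpha_{1:P}^{1:N}, \theta) := \frac{\pi(\theta, \alpha_{1:P}^{k})}{N^P} \cdot \frac{\prod_{j=1}^N \prod_{i=1}^P m_i(\alpha_i^j \mid \theta, y_i)}{\prod_{i=1}^P m_i(\alpha_i^{k_i} \mid \theta, y_i)}$ for $k = (k_1, \dots, k_P) \in \{1, \dots, N\}^P$. Then integrating over the unselected particles $\alpha_{1:P}^{-k}$ yields the marginal $\tilde{\pi}_N(k, \alpha_{1:P}^k, \theta) = \pi(\theta, \alpha_{1:P}^k) / N^P$; in particular, summing over $k$ recovers the original posterior $\pi(\theta, \alpha_{1:P})$. -/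
open MeasureTheory
open scoped BigOperators

/-- The extended target density
`π̃_N(k, α_{1:P}^{1:N}, θ) = π(θ, α^k) / N^P · ψ^θ(α^{1:N}) / ∏ᵢ mᵢ(αᵢ^{kᵢ})`
where `ψ^θ(α^{1:N}) = ∏ⱼ ∏ᵢ mᵢ(αᵢ^ⱼ | θ, yᵢ)`. -/
noncomputable def piTilde {Θ A : Type*} (P N : ℕ)
    (pi : Θ → (Fin P → A) → ℝ) (m : Fin P → Θ → A → ℝ)
    (k : Fin P → Fin N) (α : Fin P → Fin N → A) (θ : Θ) : ℝ :=
  (pi θ (fun i => α i (k i)) / (N : ℝ) ^ P) *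
    ((∏ j : Fin N, ∏ i : Fin P, m i θ (α i j)) /
      ∏ i : Fin P, m i θ (α i (k i)))

/-- Inserting the selected particle values `a` at the indices `k` and integrating the
extended target over the unselected particles yields the marginal
`π(θ, a) / N^P`; in particular, summing this marginal over all `N^P` index vectors `k`
recovers the original posterior `π(θ, a)`. -/
theorem stmt_2 {Θ A : Type*} [MeasurableSpace A] (μ : Measure A) [SigmaFinite μ]
    (P N : ℕ) (hN : 0 < N)
    (pi : Θ → (Fin P → A) → ℝ) (m : Fin P → Θ → A → ℝ)
    (hm_pos : ∀ i θ a, 0 < m i θ a)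
    (hm_meas : ∀ i θ, Measurable (m i θ))
    (hm_prob : ∀ i θ, ∫ a, m i θ a ∂μ = 1)
    (θ : Θ) (k : Fin P → Fin N) (a : Fin P → A) :
    (∫ r : (i : Fin P) → ({j : Fin N // j ≠ k i} → A),
        piTilde P N pi m k
          (fun i j => if h : j = k i then a i else r i ⟨j, h⟩) θ
        ∂(Measure.pi fun i => Measure.pi fun _ : {j : Fin N // j ≠ k i} => μ))
      = pi θ a / (N : ℝ) ^ P ∧
    (∑ _k' : Fin P → Fin N, pi θ a / (N : ℝ) ^ P) = pi θ a := by
  constructor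
  · letI : MeasureSpace A := ⟨μ⟩
    have key : ∀ r : (i : Fin P) → ({j : Fin N // j ≠ k i} → A),
        piTilde P N pi m k (fun i j => if h : j = k i then a i else r i ⟨j, h⟩) θ
        = (pi θ a / (N : ℝ) ^ P) *
          ∏ i : Fin P, ∏ j : {j : Fin N // j ≠ k i}, m i θ (r i j) := by
      intro r
      unfold piTilde
      have h1 : (fun i => if h : k i = k i then a i else r i ⟨k i, h⟩) = a := by
        funext i; simp
      rw [h1, Finset.prod_comm]
      have h2 : ∀ i : Fin P,
          (∏ j : Fin N, m i θ (if h : j = k i then a i else r i ⟨j, h⟩))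
          = m i θ (a i) * ∏ j : {j : Fin N // j ≠ k i}, m i θ (r i j) := by
        intro i
        rw [← Finset.mul_prod_erase Finset.univ _ (Finset.mem_univ (k i))]
        congr 1
        · simp
        · rw [Finset.prod_subtype (Finset.univ.erase (k i))
            (p := fun j => j ≠ k i) (by simp)
            (fun x => m i θ (if h : x = k i then a i else r i ⟨x, h⟩))]
          exact Finset.prod_congr rfl fun j _ => by rw [dif_neg j.2]
      simp_rw [h2]
      rw [Finset.prod_mul_distrib]
      have hne : (∏ i : Fin P, m i θ (a i)) ≠ 0 :=
        (Finset.prod_pos fun i _ => hm_pos i θ (a i)).ne'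
      field_simp
      simp only [dite_true]
      rw [div_eq_iff hne]
      ring
    simp_rw [key]
    rw [integral_const_mul]
    have h3 : (∫ r : (i : Fin P) → ({j : Fin N // j ≠ k i} → A),
        ∏ i : Fin P, ∏ j : {j : Fin N // j ≠ k i}, m i θ (r i j)
        ∂(Measure.pi fun i => Measure.pi fun _ : {j : Fin N // j ≠ k i} => μ)) = 1 := by
      rw [show (Measure.pi fun i => Measure.pi fun _ : {j : Fin N // j ≠ k i} => μ)
          = volume from rfl]
      erw [integral_fintype_prod_eq_prod (ι := Fin P)
        (f := fun i (x : {j : Fin N // j ≠ k i} → A) => ∏ j, m i θ (x j))]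
      rw [Finset.prod_eq_one]
      intro i _
      erw [integral_fintype_prod_eq_prod (f := fun _ (x : A) => m i θ x)]
      exact Finset.prod_eq_one fun _ _ => hm_prob i θ
    rw [h3, mul_one]
  · rw [Finset.sum_const, Finset.card_univ, Fintype.card_fun, Fintype.card_fin,
      Fintype.card_fin, nsmul_eq_mul]
    field_simp
    push_cast
    ring
end

section
/- For the extended target $\tilde{\pi}_N(k, \alpha_{1:P}^{1:N}, \theta)$ and the proposal $q_N(k^*, \alpha^{*1:N}_{1:P}, \theta^* \mid k, \alpha_{1:P}^{1:N}, \theta) = q(\theta^* \mid \theta) \psi^{\theta^*}(\alpha^{*1:N}_{1:P}) \prod_{i=1}^P \bar{w}_i^{*k_i^*}$, the ratio of target to proposal at the proposed point equals $\widehat{p}_N(y \mid \theta^*) p(\theta^*) / (Z \, q(\theta^* \mid \theta))$, where $\widehat{p}_N(y \mid \theta^*) = \prod_{i=1}^P (N^{-1} \sum_{j=1}^N w_i^{*j})$ and $Z = p(y)$. Consequently the Metropolis–Hastings acceptance probability on the extended space reduces to $\min\{1, \frac{\widehat{p}_N(y \mid \theta^*) p(\theta^*) q(\theta \mid \theta^*)}{\widehat{p}_N(y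 \mid \theta) p(\theta) q(\theta^* \mid \theta)}\}$. -/
open scoped BigOperators

namespace Stmt3

variable {Θ A : Type*} (P N : ℕ)

/-- Importance weight `w_i(a; θ) = p(y_i | a, θ) p(a | θ) / m_i(a | θ, y_i)`. -/
noncomputable def w (pY pPrior m : Fin P → Θ → A → ℝ) (i : Fin P) (θ : Θ) (a : A) : ℝ :=
  pY i θ a * pPrior i θ a / m i θ a

/-- Posterior density `π(θ, α) = p(y | θ, α) p(α | θ) p(θ) / Z`
(with conditionally independent blocks). -/
noncomputable def post (pY pPrior : Fin P → Θ → A → ℝ) (pθ : Θ → ℝ) (Z : ℝ)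
    (θ : Θ) (α : Fin P → A) : ℝ :=
  (∏ i : Fin P, pY i θ (α i) * pPrior i θ (α i)) * pθ θ / Z

/-- Joint particle density `ψ^θ(α^{1:N}) = ∏ⱼ ∏ᵢ mᵢ(αᵢ^ʲ | θ, yᵢ)`. -/
noncomputable def psi (m : Fin P → Θ → A → ℝ) (θ : Θ) (α : Fin P → Fin N → A) : ℝ :=
  ∏ j : Fin N, ∏ i : Fin P, m i θ (α i j)

/-- Extended target density `π̃_N(k, α^{1:N}, θ)`. -/
noncomputable def piTilde (pY pPrior m : Fin P → Θ → A → ℝ) (pθ : Θ → ℝ) (Z : ℝ)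
    (k : Fin P → Fin N) (α : Fin P → Fin N → A) (θ : Θ) : ℝ :=
  post P pY pPrior pθ Z θ (fun i => α i (k i)) / (N : ℝ) ^ P *
    (psi P N m θ α / ∏ i : Fin P, m i θ (α i (k i)))

/-- PMMH proposal density
`q_N(k*, α*, θ* | k, α, θ) = q(θ* | θ) ψ^{θ*}(α*) ∏ᵢ w̄ᵢ^{*kᵢ*}`. -/
noncomputable def qN (pY pPrior m : Fin P → Θ → A → ℝ) (q : Θ → Θ → ℝ)
    (k' : Fin P → Fin N) (α' : Fin P → Fin N → A) (θ' : Θ) (θ : Θ) : ℝ :=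
  q θ' θ * psi P N m θ' α' *
    ∏ i : Fin P, (w P pY pPrior m i θ' (α' i (k' i)) /
      ∑ j : Fin N, w P pY pPrior m i θ' (α' i j))

/-- Likelihood estimator `p̂_N(y | θ) = ∏ᵢ N⁻¹ ∑ⱼ wᵢʲ`. -/
noncomputable def phat (pY pPrior m : Fin P → Θ → A → ℝ) (θ : Θ)
    (α : Fin P → Fin N → A) : ℝ :=
  ∏ i : Fin P, ((N : ℝ)⁻¹ * ∑ j : Fin N, w P pY pPrior m i θ (α i j))

lemma aux (pY pPrior m : Fin P → Θ → A → ℝ) (pθ : Θ → ℝ) (Z : ℝ) (q : Θ → Θ → ℝ)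
    (hN : 0 < N) (hZ : Z ≠ 0)
    (hm_pos : ∀ i θ a, 0 < m i θ a)
    (hpY_pos : ∀ i θ a, 0 < pY i θ a)
    (hpPrior_pos : ∀ i θ a, 0 < pPrior i θ a)
    (hq_pos : ∀ θ θ', 0 < q θ θ')
    (θ θ' : Θ) (k' : Fin P → Fin N) (α' : Fin P → Fin N → A) :
    piTilde P N pY pPrior m pθ Z k' α' θ' /
        qN P N pY pPrior m q k' α' θ' θ
      = phat P N pY pPrior m θ' α' * pθ θ' / (Z * q θ' θ) := by
  have hpsi : (0:ℝ) < psi P N m θ' α' :=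
    Finset.prod_pos fun j _ => Finset.prod_pos fun i _ => hm_pos i θ' (α' i j)
  have hA : (0:ℝ) < ∏ i : Fin P, pY i θ' (α' i (k' i)) * pPrior i θ' (α' i (k' i)) :=
    Finset.prod_pos fun i _ => mul_pos (hpY_pos _ _ _) (hpPrior_pos _ _ _)
  have hM : (0:ℝ) < ∏ i : Fin P, m i θ' (α' i (k' i)) :=
    Finset.prod_pos fun i _ => hm_pos _ _ _
  have hwpos : ∀ i a, 0 < w P pY pPrior m i θ' a := fun i a =>
    div_pos (mul_pos (hpY_pos _ _ _) (hpPrior_pos _ _ _)) (hm_pos _ _ _)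
  have hS : ∀ i : Fin P, (0:ℝ) < ∑ j : Fin N, w P pY pPrior m i θ' (α' i j) := fun i =>
    Finset.sum_pos (fun j _ => hwpos i _)
      (by haveI : Nonempty (Fin N) := Fin.pos_iff_nonempty.mp hN; exact Finset.univ_nonempty)
  have hSprod : (0:ℝ) < ∏ i : Fin P, ∑ j : Fin N, w P pY pPrior m i θ' (α' i j) :=
    Finset.prod_pos fun i _ => hS i
  have hNR : ((N:ℝ)) ≠ 0 := Nat.cast_ne_zero.mpr hN.ne'
  rw [piTilde, post, qN, phat]
  rw [show (∏ i : Fin P, (w P pY pPrior m i θ' (α' i (k' i)) /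
      ∑ j : Fin N, w P pY pPrior m i θ' (α' i j)))
      = (∏ i : Fin P, w P pY pPrior m i θ' (α' i (k' i))) /
        (∏ i : Fin P, ∑ j : Fin N, w P pY pPrior m i θ' (α' i j)) from
      Finset.prod_div_distrib _ _]
  rw [Finset.prod_mul_distrib, Finset.prod_mul_distrib, Finset.prod_const]
  simp only [w, Finset.prod_div_distrib]
  have hpYp : (0:ℝ) < ∏ i : Fin P, pY i θ' (α' i (k' i)) :=
    Finset.prod_pos fun i _ => hpY_pos _ _ _
  have hpPp : (0:ℝ) < ∏ i : Fin P, pPrior i θ' (α' i (k' i)) :=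
    Finset.prod_pos fun i _ => hpPrior_pos _ _ _
  field_simp [hZ, hNR, hpsi.ne', hM.ne', hSprod.ne', (hq_pos θ' θ).ne', hpYp.ne', hpPp.ne']
  simp only [div_eq_mul_inv, Finset.prod_mul_distrib]
  rw [Finset.card_univ, Fintype.card_fin]
  have hNP : (N:ℝ) ^ P * ((N:ℝ)⁻¹) ^ P = 1 := by rw [← mul_pow, mul_inv_cancel₀ hNR, one_pow]
  linear_combination (-(((∏ x, pY x θ' (α' x (k' x))) * ∏ x, pPrior x θ' (α' x (k' x))) * pθ θ' *
      ∏ x, ∑ x_1, pY x θ' (α' x x_1) * pPrior x θ' (α' x x_1) * (m x θ' (α' x x_1))⁻¹)) * hNP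

/-- The target/proposal ratio on the extended space equals
`p̂_N(y|θ*) p(θ*) / (Z q(θ*|θ))`, and consequently the extended-space
Metropolis–Hastings acceptance probability reduces to the pseudo-marginal one. -/
theorem stmt_3 (pY pPrior m : Fin P → Θ → A → ℝ) (pθ : Θ → ℝ) (Z : ℝ) (q : Θ → Θ → ℝ)
    (hN : 0 < N) (hZ : Z ≠ 0)
    (hm_pos : ∀ i θ a, 0 < m i θ a)
    (hpY_pos : ∀ i θ a, 0 < pY i θ a)
    (hpPrior_pos : ∀ i θ a, 0 < pPrior i θ a)
    (hq_pos : ∀ θ θ', 0 < q θ θ')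
    (hpθ_pos : ∀ θ, 0 < pθ θ)
    (θ θ' : Θ) (k k' : Fin P → Fin N)
    (α α' : Fin P → Fin N → A) :
    piTilde P N pY pPrior m pθ Z k' α' θ' /
        qN P N pY pPrior m q k' α' θ' θ
      = phat P N pY pPrior m θ' α' * pθ θ' / (Z * q θ' θ) ∧
    min 1 ((piTilde P N pY pPrior m pθ Z k' α' θ' *
              qN P N pY pPrior m q k α θ θ') /
           (piTilde P N pY pPrior m pθ Z k α θ *
              qN P N pY pPrior m q k' α' θ' θ))
      = min 1 ((phat P N pY pPrior m θ' α' * pθ θ' * q θ θ') /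
               (phat P N pY pPrior m θ α * pθ θ * q θ' θ)) := by
  have hqNpos : ∀ (θ θ' : Θ) (k' : Fin P → Fin N) (α' : Fin P → Fin N → A),
      0 < qN P N pY pPrior m q k' α' θ' θ := by
    intro θ θ' k' α'
    have hwpos : ∀ i a, 0 < w P pY pPrior m i θ' a := fun i a =>
      div_pos (mul_pos (hpY_pos _ _ _) (hpPrior_pos _ _ _)) (hm_pos _ _ _)
    have hpsi : (0:ℝ) < psi P N m θ' α' :=
      Finset.prod_pos fun j _ => Finset.prod_pos fun i _ => hm_pos i θ' (α' i j)
    refine mul_pos (mul_pos (hq_pos _ _) hpsi) (Finset.prod_pos fun i _ => ?_)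
    exact div_pos (hwpos i _)
      (Finset.sum_pos (fun j _ => hwpos i _)
        (by haveI : Nonempty (Fin N) := Fin.pos_iff_nonempty.mp hN; exact Finset.univ_nonempty))
  have hphatpos : ∀ (θ : Θ) (α : Fin P → Fin N → A), 0 < phat P N pY pPrior m θ α := by
    intro θ α
    have hwpos : ∀ i a, 0 < w P pY pPrior m i θ a := fun i a =>
      div_pos (mul_pos (hpY_pos _ _ _) (hpPrior_pos _ _ _)) (hm_pos _ _ _)
    refine Finset.prod_pos fun i _ => mul_pos (by positivity) ?_
    exact Finset.sum_pos (fun j _ => hwpos i _)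
      (by haveI : Nonempty (Fin N) := Fin.pos_iff_nonempty.mp hN; exact Finset.univ_nonempty)
  have h1 := aux P N pY pPrior m pθ Z q hN hZ hm_pos hpY_pos hpPrior_pos hq_pos θ θ' k' α'
  have h2 := aux P N pY pPrior m pθ Z q hN hZ hm_pos hpY_pos hpPrior_pos hq_pos θ' θ k α
  refine ⟨h1, ?_⟩
  have hq1 : qN P N pY pPrior m q k' α' θ' θ ≠ 0 := (hqNpos θ θ' k' α').ne'
  have hq2 : qN P N pY pPrior m q k α θ θ' ≠ 0 := (hqNpos θ' θ k α).ne'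
  have e1 : piTilde P N pY pPrior m pθ Z k' α' θ'
      = phat P N pY pPrior m θ' α' * pθ θ' / (Z * q θ' θ) * qN P N pY pPrior m q k' α' θ' θ :=
    (div_eq_iff hq1).mp h1
  have e2 : piTilde P N pY pPrior m pθ Z k α θ
      = phat P N pY pPrior m θ α * pθ θ / (Z * q θ θ') * qN P N pY pPrior m q k α θ θ' :=
    (div_eq_iff hq2).mp h2
  rw [e1, e2]
  congr 1
  rw [show phat P N pY pPrior m θ' α' * pθ θ' / (Z * q θ' θ) * qN P N pY pPrior m q k' α' θ' θ *
        qN P N pY pPrior m q k α θ θ'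
      = phat P N pY pPrior m θ' α' * pθ θ' / (Z * q θ' θ) *
          (qN P N pY pPrior m q k' α' θ' θ * qN P N pY pPrior m q k α θ θ') from by ring,
    show phat P N pY pPrior m θ α * pθ θ / (Z * q θ θ') * qN P N pY pPrior m q k α θ θ' *
        qN P N pY pPrior m q k' α' θ' θ
      = phat P N pY pPrior m θ α * pθ θ / (Z * q θ θ') *
          (qN P N pY pPrior m q k' α' θ' θ * qN P N pY pPrior m q k α θ θ') from by ring,
    mul_div_mul_right _ _ (mul_ne_zero hq1 hq2)]
  field_simp [hZ, (hphatpos θ α).ne', (hpθ_pos θ).ne', (hq_pos θ' θ).ne', (hq_pos θ θ').ne']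

end Stmt3
end
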